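/- (Bounds on the unconditioned infinite-horizon value) Let Assumptions A1 (continuity and compactness), A2 (strict dissipativity), A3 (terminal conditions), A5 (bound on V_N) and A6 (minimality of Π*) hold, and let ℓ_{Π*} = 0. Then there exists D > 0 such that for all N ∈ N and all x ∈ X_N, −D ≤ V^uc_∞(x) ≤ γ_V(||x||_{Π*_X}) + V_N(Π*_X(i_x)) − V_{Π*}, where γ_V is the function from A5. -/

import Mathlib

open Filter Topology

section EMPCDefs

variable {E F : Type*} [NormedAddCommGroup E] [NormedAddCommGroup F]

/-- State trajectory `x_u(k, x₀)` of the system `x⁺ = f(x, u)` under input sequence `u`. -/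
def traj (f : E × F → E) (x : E) (u : ℕ → F) : ℕ → E
  | 0 => x
  | k + 1 => f (traj f x u k, u k)

/-- `u ∈ U^N(x)`: input sequences of length `N` keeping the state in `X`. -/
def FeasN (f : E × F → E) (X : Set E) (U : Set F) (x : E) (N : ℕ) (u : ℕ → F) : Prop :=
  (∀ k < N, u k ∈ U) ∧ ∀ k ≤ N, traj f x u k ∈ X

/-- `u ∈ U^∞(x)`: infinite input sequences keeping the state in `X`. -/
def FeasInf (f : E × F → E) (X : Set E) (U : Set F) (x : E) (u : ℕ → F) : Prop :=
  (∀ k, u k ∈ U) ∧ ∀ k, traj f x u k ∈ X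

/-- The feasible set `X_N` of the terminal-constrained problem. -/
def XN (f : E × F → E) (X : Set E) (U : Set F) (Xf : Set E) (N : ℕ) : Set E :=
  {x | ∃ u : ℕ → F, FeasN f X U x N u ∧ traj f x u N ∈ Xf}

/-- The feasible set `X_∞`. -/
def XInf (f : E × F → E) (X : Set E) (U : Set F) : Set E :=
  {x | ∃ u : ℕ → F, FeasInf f X U x u}

/-- Distance `‖(x,u)‖_Π` of a state-input pair to a `p`-periodic orbit `Π = (i ↦ P i)`. -/
noncomputable def distOrbit (p : ℕ) (P : ℕ → E × F) (z : E × F) : ℝ :=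
  ⨅ i : Fin p, ‖z - P ↑i‖

/-- Distance `‖x‖_{Π_X}` of a state to the state part of a `p`-periodic orbit. -/
noncomputable def distOrbitX (p : ℕ) (PX : ℕ → E) (x : E) : ℝ :=
  ⨅ i : Fin p, ‖x - PX ↑i‖

/-- `Π = (Π_X, Π_U)` (given on `{0, …, p-1}`) is a feasible `p`-periodic orbit. -/
def FeasOrbit (f : E × F → E) (X : Set E) (U : Set F) (p : ℕ)
    (PX : ℕ → E) (PU : ℕ → F) : Prop :=
  (∀ i < p, PX i ∈ X) ∧ (∀ i < p, PU i ∈ U) ∧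
    ∀ i < p, PX ((i + 1) % p) = f (PX i, PU i)

/-- Average cost `ℓ_Π = (1/p) Σ_{i<p} ℓ(Π(i))` of a `p`-periodic orbit. -/
noncomputable def avgCost (ℓ : E × F → ℝ) (p : ℕ) (PX : ℕ → E) (PU : ℕ → F) : ℝ :=
  (1 / (p : ℝ)) * ∑ i ∈ Finset.range p, ℓ (PX i, PU i)

/-- Average `(1/p) Σ_{i<p} g(Π_X(i))` of a function over the state part of an orbit. -/
noncomputable def avgOrbit (g : E → ℝ) (p : ℕ) (PX : ℕ → E) : ℝ :=
  (1 / (p : ℝ)) * ∑ i ∈ Finset.range p, g (PX i)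

/-- `Π*` is an optimal periodic orbit: it is feasible and its average cost is the
infimum of the average costs over all feasible periodic orbits. -/
def IsOptimalOrbit (f : E × F → E) (X : Set E) (U : Set F) (ℓ : E × F → ℝ) (p : ℕ)
    (PX : ℕ → E) (PU : ℕ → F) : Prop :=
  FeasOrbit f X U p PX PU ∧
    ∀ q : ℕ, 0 < q → ∀ (QX : ℕ → E) (QU : ℕ → F),
      FeasOrbit f X U q QX QU → avgCost ℓ p PX PU ≤ avgCost ℓ q QX QU

/-- Accumulated stage cost `J^1_K(x, u)`. -/
noncomputable def J1 (f : E × F → E) (ℓ : E × F → ℝ) (x : E) (u : ℕ → F) (K : ℕ) : ℝ :=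
  ∑ k ∈ Finset.range K, ℓ (traj f x u k, u k)

/-- Finite-horizon cost functional `J_N(x, u)` with terminal cost `Vf`. -/
noncomputable def JN (f : E × F → E) (ℓ : E × F → ℝ) (Vf : E → ℝ) (x : E) (u : ℕ → F)
    (N : ℕ) : ℝ :=
  J1 f ℓ x u N + Vf (traj f x u N)

/-- Optimal value function `V_N(x)` of the terminal-constrained problem. -/
noncomputable def VN (f : E × F → E) (X : Set E) (U : Set F) (ℓ : E × F → ℝ) (Vf : E → ℝ)
    (Xf : Set E) (N : ℕ) (x : E) : ℝ :=
  sInf ((fun u => JN f ℓ Vf x u N) '' {u : ℕ → F | FeasN f X U x N u ∧ traj f x u N ∈ Xf})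

/-- Rotated stage cost `ℓ̃(x,u) = ℓ(x,u) - ℓ_{Π*} + λ(x) - λ(f(x,u))`. -/
def rotCost (f : E × F → E) (ℓ : E × F → ℝ) (lam : E → ℝ) (lp : ℝ) (z : E × F) : ℝ :=
  ℓ z - lp + lam z.1 - lam (f z)

/-- Finite-horizon Cesàro cost `J^ces_K(x,u) = Σ_{k<K} (1 - k/K) ℓ(x_u(k,x), u(k))`. -/
noncomputable def Jces (f : E × F → E) (ℓ : E × F → ℝ) (x : E) (u : ℕ → F) (K : ℕ) : ℝ :=
  ∑ k ∈ Finset.range K, (1 - (k : ℝ) / (K : ℝ)) * ℓ (traj f x u k, u k)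

/-- Infinite-horizon Cesàro cost `J^ces_∞(x,u) = limsup_K J^ces_K(x,u)`. -/
noncomputable def JcesInf (f : E × F → E) (ℓ : E × F → ℝ) (x : E) (u : ℕ → F) : ℝ :=
  limsup (fun K : ℕ => Jces f ℓ x u K) atTop

/-- Unconditioned infinite-horizon value `V^uc_∞(x)`. -/
noncomputable def VucInf (f : E × F → E) (X : Set E) (U : Set F) (ℓ : E × F → ℝ)
    (x : E) : ℝ :=
  sInf ((fun u => JcesInf f ℓ x u) '' {u : ℕ → F | FeasInf f X U x u})

/-- Closed-loop state trajectory `x_μ(k, x)` under a feedback law `μ`. -/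
def trajCl (f : E × F → E) (μ : E → F) (x : E) : ℕ → E
  | 0 => x
  | k + 1 => f (trajCl f μ x k, μ (trajCl f μ x k))

/-- Closed-loop finite-horizon Cesàro cost `J^cl_K(x, μ)`. -/
noncomputable def JclK (f : E × F → E) (ℓ : E × F → ℝ) (μ : E → F) (x : E) (K : ℕ) : ℝ :=
  ∑ k ∈ Finset.range K, (1 - (k : ℝ) / (K : ℝ)) * ℓ (trajCl f μ x k, μ (trajCl f μ x k))

/-- Closed-loop infinite-horizon Cesàro cost `J^cl_∞(x, μ)`. -/
noncomputable def JclInf (f : E × F → E) (ℓ : E × F → ℝ) (μ : E → F) (x : E) : ℝ :=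
  limsup (fun K : ℕ => JclK f ℓ μ x K) atTop

end EMPCDefs

/-- Class `K_∞` comparison functions `[0,∞) → [0,∞)`. -/
def IsKInf (α : ℝ → ℝ) : Prop :=
  ContinuousOn α (Set.Ici 0) ∧ StrictMonoOn α (Set.Ici 0) ∧ α 0 = 0 ∧
    Filter.Tendsto α Filter.atTop Filter.atTop

/-- Class `L` comparison functions `[0,∞) → [0,∞)`. -/
def IsClassL (σ : ℝ → ℝ) : Prop :=
  ContinuousOn σ (Set.Ici 0) ∧ AntitoneOn σ (Set.Ici 0) ∧ (∀ t, 0 ≤ t → 0 ≤ σ t) ∧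
    Filter.Tendsto σ Filter.atTop (nhds 0)


section AuxLemmas

open Finset

lemma sum_J1_aux (c : ℕ → ℝ) : ∀ K : ℕ,
    ∑ n ∈ range K, (∑ k ∈ range (n+1), c k) = ∑ k ∈ range K, ((K : ℝ) - k) * c k := by
  intro K
  induction K with
  | zero => simp
  | succ K ih =>
      rw [Finset.sum_range_succ, ih]
      have h1 : ∑ k ∈ range (K+1), (((K:ℝ)+1) - k) * c k
          = ∑ k ∈ range (K+1), (((K:ℝ) - k) * c k + c k) := by
        apply Finset.sum_congr rfl; intro k _; ring
      push_cast
      rw [h1, Finset.sum_add_distrib, Finset.sum_range_succ (fun k => ((K:ℝ) - k) * c k)]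
      simp

lemma mod_shift_eq (p b r : ℕ) (hp : 0 < p) (hr : r < p) :
    (p - b % p + (r + b)) % p = r := by
  have h1 := Nat.div_add_mod b p
  have h2 : b % p < p := Nat.mod_lt b hp
  set q := p * (b / p) with hq
  have e : p - b % p + (r + b) = r + (q + p) := by omega
  have e2 : q + p = p * (b / p + 1) := by rw [hq]; ring
  rw [e, e2, Nat.add_mul_mod_self_left, Nat.mod_eq_of_lt hr]

lemma sum_mod_shift (g : ℕ → ℝ) {p : ℕ} (hp : 0 < p) (b : ℕ) :
    ∑ r ∈ range p, g ((r + b) % p) = ∑ i ∈ range p, g i := by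
  apply Finset.sum_nbij' (i := fun r => (r + b) % p) (j := fun i => (p - b % p + i) % p)
  · intro a _; exact Finset.mem_range.2 (Nat.mod_lt _ hp)
  · intro a _; exact Finset.mem_range.2 (Nat.mod_lt _ hp)
  · intro r hr
    have hr' := Finset.mem_range.1 hr
    calc (p - b % p + (r + b) % p) % p = (p - b % p + (r + b)) % p := by
          rw [Nat.add_mod_mod]
      _ = r := mod_shift_eq p b r hp hr'
  · intro i hi
    have hi' := Finset.mem_range.1 hi
    calc ((p - b % p + i) % p + b) % p = (p - b % p + i + b) % p := by
          rw [Nat.mod_add_mod]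
      _ = (p - b % p + (i + b)) % p := by ring_nf
      _ = i := mod_shift_eq p b i hp hi'
  · intro a _; rfl

lemma tendsto_avg_mod (g : ℕ → ℝ) {p : ℕ} (hp : 0 < p) (a : ℕ) :
    Filter.Tendsto (fun K : ℕ => (1/(K:ℝ)) * ∑ q ∈ range K, g ((q + a) % p)) Filter.atTop
      (𝓝 ((1/(p:ℝ)) * ∑ i ∈ range p, g i)) := by
  set S : ℕ → ℝ := fun K => ∑ q ∈ range K, g ((q + a) % p) with hS
  set Vs : ℝ := ∑ i ∈ range p, g i with hVs
  set V : ℝ := (1/(p:ℝ)) * Vs with hV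
  have hpV : (p : ℝ) * V = Vs := by
    rw [hV]; field_simp
  have hstep : ∀ K, S (K + p) = S K + Vs := by
    intro K
    have : S (K + p) = S K + ∑ r ∈ range p, g ((K + r + a) % p) := by
      rw [hS]; exact Finset.sum_range_add (fun q => g ((q + a) % p)) K p
    rw [this, hVs]
    congr 1
    calc ∑ r ∈ range p, g ((K + r + a) % p) = ∑ r ∈ range p, g ((r + (K + a)) % p) := by
          apply Finset.sum_congr rfl; intro r _; ring_nf
      _ = ∑ i ∈ range p, g i := sum_mod_shift g hp (K + a)
  set T : ℕ → ℝ := fun K => S K - K * V with hT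
  have hTstep : ∀ K, T (K + p) = T K := by
    intro K
    simp only [hT, hstep K]
    push_cast
    rw [← hpV]; ring
  have hTm : ∀ m K, T (K + p * m) = T K := by
    intro m
    induction m with
    | zero => intro K; simp
    | succ m ih =>
        intro K
        have : K + p * (m+1) = (K + p * m) + p := by ring
        rw [this, hTstep, ih]
  have hTmod : ∀ K, T K = T (K % p) := by
    intro K
    conv_lhs => rw [← Nat.mod_add_div K p]
    exact hTm (K / p) (K % p)
  obtain ⟨B, hB⟩ : ∃ B, ∀ K, |T K| ≤ B := by
    have hne : ((range p).image fun r => |T r|).Nonempty :=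
      ⟨|T 0|, Finset.mem_image.2 ⟨0, Finset.mem_range.2 hp, rfl⟩⟩
    refine ⟨((range p).image fun r => |T r|).max' hne, fun K => ?_⟩
    rw [hTmod K]
    have hmem : |T (K % p)| ∈ (range p).image fun r => |T r| :=
      Finset.mem_image.2 ⟨K % p, Finset.mem_range.2 (Nat.mod_lt _ hp), rfl⟩
    exact Finset.le_max' _ _ hmem
  rw [tendsto_iff_dist_tendsto_zero]
  apply squeeze_zero' (g := fun K : ℕ => B * (1/(K:ℝ)))
  · exact Filter.Eventually.of_forall (fun K => dist_nonneg)
  · filter_upwards [Filter.eventually_ge_atTop 1] with K hK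
    have hK0 : (K:ℝ) ≠ 0 := by positivity
    have : (1/(K:ℝ)) * S K - V = T K * (1/K) := by
      rw [hT]; field_simp
    rw [Real.dist_eq, this, abs_mul, abs_of_nonneg (by positivity : (0:ℝ) ≤ 1/(K:ℝ))]
    exact mul_le_mul_of_nonneg_right (hB K) (by positivity)
  · simpa using tendsto_one_div_atTop_nhds_zero_nat.const_mul B

lemma kinf_nonneg {α : ℝ → ℝ} (h : IsKInf α) {t : ℝ} (ht : 0 ≤ t) : 0 ≤ α t := by
  obtain ⟨hc, hm, h0, hT⟩ := h
  rcases eq_or_lt_of_le ht with heq | hlt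
  · rw [← heq, h0]
  · rw [← h0]; exact le_of_lt (hm Set.self_mem_Ici (Set.mem_Ici.2 ht) hlt)

lemma kinf_pos {α : ℝ → ℝ} (h : IsKInf α) {t : ℝ} (ht : 0 < t) : 0 < α t := by
  obtain ⟨hc, hm, h0, hT⟩ := h
  rw [← h0]; exact hm Set.self_mem_Ici (Set.mem_Ici.2 ht.le) ht

lemma tendsto_zero_of_kinf {α : ℝ → ℝ} (h : IsKInf α) {d : ℕ → ℝ} (hd : ∀ n, 0 ≤ d n)
    (hα : Filter.Tendsto (fun n => α (d n)) Filter.atTop (𝓝 0)) :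
    Filter.Tendsto d Filter.atTop (𝓝 0) := by
  rw [Metric.tendsto_atTop] at hα ⊢
  intro ε hε
  obtain ⟨M, hM⟩ := hα (α ε) (kinf_pos h hε)
  refine ⟨M, fun n hn => ?_⟩
  have h1 := hM n hn
  rw [Real.dist_eq, sub_zero] at h1 ⊢
  rw [abs_of_nonneg (hd n)]
  by_contra hc
  push_neg at hc
  have h2 : α ε ≤ α (d n) := by
    obtain ⟨_, hm, _, _⟩ := h
    exact hm.monotoneOn (Set.mem_Ici.2 hε.le) (Set.mem_Ici.2 (hd n)) hc
  rw [abs_of_nonneg (kinf_nonneg h (hd n))] at h1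
  linarith

section WithGroups

variable {E F : Type*} [NormedAddCommGroup E] [NormedAddCommGroup F]

lemma traj_congr (f : E × F → E) (x : E) (u w : ℕ → F) :
    ∀ n, (∀ k < n, w k = u k) → traj f x w n = traj f x u n := by
  intro n
  induction n with
  | zero => intro _; rfl
  | succ n ih =>
      intro h
      show f (traj f x w n, w n) = f (traj f x u n, u n)
      rw [ih (fun k hk => h k (Nat.lt_succ_of_lt hk)), h n (Nat.lt_succ_self n)]

lemma J1_succ (f : E × F → E) (ℓ : E × F → ℝ) (x : E) (u : ℕ → F) (n : ℕ) :
    J1 f ℓ x u (n+1) = J1 f ℓ x u n + ℓ (traj f x u n, u n) :=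
  Finset.sum_range_succ _ _

lemma Jces_eq_avg (f : E × F → E) (ℓ : E × F → ℝ) (x : E) (u : ℕ → F) (K : ℕ) :
    Jces f ℓ x u K = (1/(K:ℝ)) * ∑ n ∈ range K, J1 f ℓ x u (n+1) := by
  rcases Nat.eq_zero_or_pos K with h | h
  · subst h; simp [Jces]
  have hK : (K:ℝ) ≠ 0 := by positivity
  unfold Jces J1
  rw [sum_J1_aux, Finset.mul_sum]
  apply Finset.sum_congr rfl
  intro k _
  have h2 : (1 - (k:ℝ)/K) = (1/(K:ℝ)) * ((K:ℝ) - k) := by field_simp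
  rw [h2, mul_assoc]

lemma distOrbit_nonneg (p : ℕ) (P : ℕ → E × F) (z : E × F) : 0 ≤ distOrbit p P z :=
  Real.iInf_nonneg fun _ => norm_nonneg _

lemma distOrbit_le {p : ℕ} (P : ℕ → E × F) (z : E × F) {i : ℕ} (hi : i < p) :
    distOrbit p P z ≤ ‖z - P i‖ := by
  have hbdd : BddBelow (Set.range fun i : Fin p => ‖z - P ↑i‖) :=
    ⟨0, by rintro _ ⟨j, rfl⟩; exact norm_nonneg _⟩
  exact ciInf_le hbdd (⟨i, hi⟩ : Fin p)

lemma distOrbit_exists {p : ℕ} (hp : 0 < p) (P : ℕ → E × F) (z : E × F) :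
    ∃ i, i < p ∧ ‖z - P i‖ = distOrbit p P z := by
  have hne : Nonempty (Fin p) := ⟨⟨0, hp⟩⟩
  obtain ⟨i0, hi0⟩ := Finite.exists_min (fun i : Fin p => ‖z - P ↑i‖)
  exact ⟨i0, i0.2, le_antisymm (le_ciInf hi0) (distOrbit_le P z i0.2)⟩

end WithGroups

end AuxLemmas

section MainAux

open Filter Finset

variable {E F : Type*} [NormedAddCommGroup E] [NormedAddCommGroup F]

lemma J1_lb (f : E × F → E) (ℓ : E × F → ℝ) (X : Set E) (U : Set F) (lam : E → ℝ)
    (hdiss' : ∀ z ∈ X, ∀ v ∈ U, f (z, v) ∈ X → lam (f (z, v)) - lam z ≤ ℓ (z, v))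
    (x' : E) (u : ℕ → F) (hu : FeasInf f X U x' u) :
    ∀ n, lam (traj f x' u n) - lam x' ≤ J1 f ℓ x' u n := by
  intro n
  induction n with
  | zero => simp [J1, traj]
  | succ n ih =>
      rw [J1_succ]
      have h1 := hdiss' (traj f x' u n) (hu.2 n) (u n) (hu.1 n) (hu.2 (n+1))
      have h2 : traj f x' u (n+1) = f (traj f x' u n, u n) := rfl
      rw [h2]
      linarith

lemma Jces_lb (f : E × F → E) (ℓ : E × F → ℝ) (X : Set E) (U : Set F) (lam : E → ℝ)
    (hdiss' : ∀ z ∈ X, ∀ v ∈ U, f (z, v) ∈ X → lam (f (z, v)) - lam z ≤ ℓ (z, v))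
    (Λ : ℝ) (hΛ0 : 0 ≤ Λ) (hΛ : ∀ z ∈ X, |lam z| ≤ Λ)
    (x' : E) (u : ℕ → F) (hu : FeasInf f X U x' u) :
    ∀ K, -(2*Λ) ≤ Jces f ℓ x' u K := by
  intro K
  rcases Nat.eq_zero_or_pos K with rfl | hK
  · simp [Jces]; linarith
  rw [Jces_eq_avg]
  have hterm : ∀ n ∈ Finset.range K, -(2*Λ) ≤ J1 f ℓ x' u (n+1) := by
    intro n _
    have h1 := J1_lb f ℓ X U lam hdiss' x' u hu (n+1)
    have h2 := abs_le.1 (hΛ _ (hu.2 (n+1)))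
    have h3' : traj f x' u 0 = x' := rfl
    have h3 := abs_le.1 (hΛ _ (hu.2 0))
    rw [h3'] at h3
    obtain ⟨h2a, h2b⟩ := h2
    obtain ⟨h3a, h3b⟩ := h3
    linarith
  have hsum : (-(2*Λ)) * K ≤ ∑ n ∈ Finset.range K, J1 f ℓ x' u (n+1) := by
    calc (-(2*Λ)) * K = ∑ _n ∈ Finset.range K, (-(2*Λ)) := by
          rw [Finset.sum_const, Finset.card_range]; push_cast; ring
      _ ≤ _ := Finset.sum_le_sum hterm
  have hKpos : (0:ℝ) < K := by exact_mod_cast hK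
  calc -(2*Λ) = (1/(K:ℝ)) * ((-(2*Λ)) * K) := by field_simp
    _ ≤ _ := mul_le_mul_of_nonneg_left hsum (by positivity)

lemma JcesInf_lb (f : E × F → E) (ℓ : E × F → ℝ) (X : Set E) (U : Set F) (lam : E → ℝ)
    (hdiss' : ∀ z ∈ X, ∀ v ∈ U, f (z, v) ∈ X → lam (f (z, v)) - lam z ≤ ℓ (z, v))
    (Λ : ℝ) (hΛ0 : 0 ≤ Λ) (hΛ : ∀ z ∈ X, |lam z| ≤ Λ)
    (x' : E) (u : ℕ → F) (hu : FeasInf f X U x' u) :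
    -(2*Λ) ≤ JcesInf f ℓ x' u := by
  have hls : JcesInf f ℓ x' u
      = sInf {a : ℝ | ∀ᶠ K in Filter.atTop, Jces f ℓ x' u K ≤ a} := by
    simp only [JcesInf]; exact Filter.limsup_eq
  rw [hls]
  rcases Set.eq_empty_or_nonempty {a : ℝ | ∀ᶠ K in Filter.atTop, Jces f ℓ x' u K ≤ a}
    with he | hne
  · rw [he, Real.sInf_empty]; linarith
  · apply le_csInf hne
    intro a ha
    obtain ⟨K, hK⟩ := ha.exists
    exact le_trans (Jces_lb f ℓ X U lam hdiss' Λ hΛ0 hΛ x' u hu K) hK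

lemma key_lemma (f : E × F → E) (ℓ : E × F → ℝ) (X : Set E) (U : Set F)
    {p : ℕ} (hp : 0 < p) (PX : ℕ → E) (PU : ℕ → F)
    (horbX : ∀ i < p, PX i ∈ X) (horbU : ∀ i < p, PU i ∈ U)
    (horbf : ∀ i < p, PX ((i + 1) % p) = f (PX i, PU i))
    (hcomp : IsCompact (X ×ˢ U)) (hfc : ContinuousOn f (X ×ˢ U))
    (lam : E → ℝ)
    (αl : ℝ → ℝ) (hαl : IsKInf αl)
    (hdiss0 : ∀ z ∈ X, ∀ v ∈ U, f (z, v) ∈ X →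
      αl (distOrbit p (fun i => (PX i, PU i)) (z, v)) ≤ ℓ (z, v) + lam z - lam (f (z, v)))
    (Xf : Set E) (hXfc : IsCompact Xf) (hXfX : Xf ⊆ X) (hPXf : ∀ i < p, PX i ∈ Xf)
    (Vf : E → ℝ) (hVfc : ContinuousOn Vf Xf)
    (uf : E → F) (hufU : ∀ z ∈ Xf, uf z ∈ U) (hufXf : ∀ z ∈ Xf, f (z, uf z) ∈ Xf)
    (hufD0 : ∀ z ∈ Xf, Vf (f (z, uf z)) + ℓ (z, uf z) ≤ Vf z)
    (hmin : Set.InjOn PX (Set.Iio p))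
    (mY : ℝ) (hmY : ∀ z ∈ Xf, mY ≤ Vf z + lam z)
    (Λ : ℝ) (hΛ0 : 0 ≤ Λ) (hΛ : ∀ z ∈ X, |lam z| ≤ Λ)
    (hdiss' : ∀ z ∈ X, ∀ v ∈ U, f (z, v) ∈ X → lam (f (z, v)) - lam z ≤ ℓ (z, v))
    (N : ℕ) (hN : 0 < N) (x : E) (u : ℕ → F)
    (hu : FeasN f X U x N u) (hT : traj f x u N ∈ Xf) :
    ∃ w, FeasInf f X U x w ∧
      JcesInf f ℓ x w ≤ JN f ℓ Vf x u N - avgOrbit Vf p PX := by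
  classical
  set xN := traj f x u N with hxN
  set z : ℕ → E := trajCl f uf xN with hzdef
  set w : ℕ → F := fun k => if k < N then u k else uf (z (k - N)) with hwdef
  have hz0 : z 0 = xN := rfl
  have hzsucc : ∀ j, z (j+1) = f (z j, uf (z j)) := fun j => rfl
  have hzXf : ∀ j, z j ∈ Xf := by
    intro j; induction j with
    | zero => exact hT
    | succ j ih => rw [hzsucc]; exact hufXf _ ih
  have hzX : ∀ j, z j ∈ X := fun j => hXfX (hzXf j)
  have hwlt : ∀ k, k < N → w k = u k := by
    intro k hk; rw [hwdef]; simp only; rw [if_pos hk]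
  have hwge : ∀ j, w (N + j) = uf (z j) := by
    intro j
    have hj : N + j - N = j := by omega
    rw [hwdef]; simp only
    rw [if_neg (by omega), hj]
  have htraj_le : ∀ k, k ≤ N → traj f x w k = traj f x u k := by
    intro k hk
    exact traj_congr f x u w k (fun k' hk' => hwlt k' (lt_of_lt_of_le hk' hk))
  have htrajN : ∀ j, traj f x w (N + j) = z j := by
    intro j; induction j with
    | zero => rw [Nat.add_zero, htraj_le N le_rfl, hz0]
    | succ j ih =>
        have h1 : N + (j+1) = (N + j) + 1 := rfl
        rw [h1]
        show f (traj f x w (N+j), w (N+j)) = z (j+1)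
        rw [ih, hwge j, hzsucc]
  have hwInf : FeasInf f X U x w := by
    constructor
    · intro k
      by_cases hk : k < N
      · rw [hwlt k hk]; exact hu.1 k hk
      · have h1 : k = N + (k - N) := by omega
        rw [h1, hwge]; exact hufU _ (hzXf _)
    · intro k
      rcases le_or_gt k N with hk | hk
      · rw [htraj_le k hk]; exact hu.2 k hk
      · have h1 : k = N + (k - N) := by omega
        rw [h1, htrajN]; exact hzX _
  set m : ℕ → ℝ := fun j => ℓ (z j, uf (z j)) with hm
  have hJ1w : ∀ n, n ≤ N → J1 f ℓ x w n = J1 f ℓ x u n := by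
    intro n hn
    unfold J1
    apply Finset.sum_congr rfl
    intro k hk
    have hkN : k < N := lt_of_lt_of_le (Finset.mem_range.1 hk) hn
    rw [htraj_le k hkN.le, hwlt k hkN]
  have hJ1ext : ∀ q, J1 f ℓ x w (N + q) = J1 f ℓ x u N + ∑ j ∈ Finset.range q, m j := by
    intro q; induction q with
    | zero => simpa using hJ1w N le_rfl
    | succ q ih =>
        have h1 : N + (q+1) = (N + q) + 1 := rfl
        rw [h1, J1_succ, ih, Finset.sum_range_succ, htrajN, hwge]
        ring
  have hufD' : ∀ j, m j ≤ Vf (z j) - Vf (z (j+1)) := by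
    intro j
    have h1 := hufD0 (z j) (hzXf j)
    rw [hm]; simp only
    rw [hzsucc j]
    linarith
  have hmsum : ∀ q, ∑ j ∈ Finset.range q, m j ≤ Vf (z 0) - Vf (z q) := by
    intro q; induction q with
    | zero => simp
    | succ q ih =>
        rw [Finset.sum_range_succ]
        have := hufD' q
        linarith
  set d : ℕ → ℝ := fun j => distOrbit p (fun i => (PX i, PU i)) (z j, uf (z j)) with hd
  have hd0 : ∀ j, 0 ≤ d j := fun j => distOrbit_nonneg _ _ _
  have hαd : ∀ j, αl (d j) ≤ m j + lam (z j) - lam (z (j+1)) := by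
    intro j
    have h1 := hdiss0 (z j) (hzX j) (uf (z j)) (hufU _ (hzXf j))
      (by rw [← hzsucc]; exact hzX (j+1))
    rw [← hzsucc j] at h1
    rw [hm]; simp only
    linarith
  have hY : ∀ q, ∑ j ∈ Finset.range q, αl (d j)
      ≤ (Vf (z 0) + lam (z 0)) - (Vf (z q) + lam (z q)) := by
    intro q; induction q with
    | zero => simp
    | succ q ih =>
        rw [Finset.sum_range_succ]
        have h1 := hαd q
        have h2 := hufD' q
        linarith
  have hsummable : Summable (fun j => αl (d j)) := by
    apply summable_of_sum_range_le (c := (Vf (z 0) + lam (z 0)) - mY)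
      (fun j => kinf_nonneg hαl (hd0 j))
    intro q
    have h1 := hmY _ (hzXf q)
    have h2 := hY q
    linarith
  have hdto0 : Filter.Tendsto d Filter.atTop (𝓝 0) :=
    tendsto_zero_of_kinf hαl hd0 hsummable.tendsto_atTop_zero
  have hφex : ∀ j, ∃ i, i < p ∧ ‖(z j, uf (z j)) - (PX i, PU i)‖ = d j := fun j =>
    distOrbit_exists hp (fun i => (PX i, PU i)) (z j, uf (z j))
  choose φ hφp hφd using hφex
  have hzclose : ∀ j, ‖z j - PX (φ j)‖ ≤ d j := by
    intro j
    rw [← hφd j]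
    have h1 := norm_fst_le ((z j, uf (z j)) - (PX (φ j), PU (φ j)))
    simpa using h1
  have hphase : ∃ J, ∀ j, J ≤ j → φ (j+1) = (φ j + 1) % p := by
    rcases Nat.lt_or_ge p 2 with hp2 | hp2
    · refine ⟨0, fun j _ => ?_⟩
      have h1 := hφp (j+1)
      have h2 : p = 1 := by omega
      subst h2
      omega
    · obtain ⟨δ, hδpos, hδle⟩ : ∃ δ, 0 < δ ∧
          ∀ i, i < p → ∀ i', i' < p → i ≠ i' → δ ≤ ‖PX i - PX i'‖ := by
        set S := (Finset.range p ×ˢ Finset.range p).filter (fun q => q.1 ≠ q.2) with hSdef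
        have hSne : S.Nonempty := by
          refine ⟨(0,1), Finset.mem_filter.2 ⟨Finset.mem_product.2
            ⟨Finset.mem_range.2 (by omega), Finset.mem_range.2 (by omega)⟩, by simp⟩⟩
        refine ⟨S.inf' hSne (fun q => ‖PX q.1 - PX q.2‖), ?_, ?_⟩
        · rw [Finset.lt_inf'_iff]
          intro q hq
          obtain ⟨hqp, hne⟩ := Finset.mem_filter.1 hq
          obtain ⟨h1, h2⟩ := Finset.mem_product.1 hqp
          have h3 : PX q.1 ≠ PX q.2 := fun heq => hne
            (hmin (Set.mem_Iio.2 (Finset.mem_range.1 h1))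
              (Set.mem_Iio.2 (Finset.mem_range.1 h2)) heq)
          rw [norm_pos_iff]
          exact sub_ne_zero.2 h3
        · intro i hi i' hi' hne
          have hmem : ((i, i') : ℕ × ℕ) ∈ S := Finset.mem_filter.2 ⟨Finset.mem_product.2
            ⟨Finset.mem_range.2 hi, Finset.mem_range.2 hi'⟩, hne⟩
          exact Finset.inf'_le _ hmem
      have hUC := hcomp.uniformContinuousOn_of_continuous hfc
      rw [Metric.uniformContinuousOn_iff] at hUC
      obtain ⟨η, hη, hfη⟩ := hUC (δ/2) (by linarith)
      have hev : ∀ᶠ j in Filter.atTop, d j < min η (δ/4) :=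
        hdto0.eventually_lt_const (by positivity)
      obtain ⟨J, hJ⟩ := Filter.eventually_atTop.1 hev
      refine ⟨J, fun j hj => ?_⟩
      have hdj := hJ j hj
      have hdj1 := hJ (j+1) (by omega)
      have ha1 : ‖z (j+1) - PX ((φ j + 1) % p)‖ < δ/2 := by
        have horb : PX ((φ j + 1) % p) = f (PX (φ j), PU (φ j)) := horbf (φ j) (hφp j)
        rw [hzsucc j, horb]
        have hmem1 : (z j, uf (z j)) ∈ X ×ˢ U := Set.mem_prod.2 ⟨hzX j, hufU _ (hzXf j)⟩
        have hmem2 : (PX (φ j), PU (φ j)) ∈ X ×ˢ U := Set.mem_prod.2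
          ⟨horbX _ (hφp j), horbU _ (hφp j)⟩
        have hdist : dist ((z j, uf (z j))) ((PX (φ j), PU (φ j))) < η := by
          rw [dist_eq_norm, hφd j]
          exact lt_of_lt_of_le hdj (min_le_left _ _)
        have h5 := hfη _ hmem1 _ hmem2 hdist
        rwa [dist_eq_norm] at h5
      have ha2 : ‖z (j+1) - PX (φ (j+1))‖ < δ/4 :=
        lt_of_le_of_lt (hzclose (j+1)) (lt_of_lt_of_le hdj1 (min_le_right _ _))
      by_contra hne
      have hd3 : δ ≤ ‖PX (φ (j+1)) - PX ((φ j + 1) % p)‖ :=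
        hδle _ (hφp (j+1)) _ (Nat.mod_lt _ (by omega)) hne
      have htri : ‖PX (φ (j+1)) - PX ((φ j + 1) % p)‖
          ≤ ‖z (j+1) - PX (φ (j+1))‖ + ‖z (j+1) - PX ((φ j + 1) % p)‖ := by
        calc ‖PX (φ (j+1)) - PX ((φ j + 1) % p)‖
            = ‖(PX (φ (j+1)) - z (j+1)) + (z (j+1) - PX ((φ j + 1) % p))‖ := by
              rw [sub_add_sub_cancel]
          _ ≤ ‖PX (φ (j+1)) - z (j+1)‖ + ‖z (j+1) - PX ((φ j + 1) % p)‖ := norm_add_le _ _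
          _ = ‖z (j+1) - PX (φ (j+1))‖ + ‖z (j+1) - PX ((φ j + 1) % p)‖ := by
              rw [norm_sub_rev]
      linarith
  obtain ⟨J, hJphase⟩ := hphase
  have hφform : ∀ j, J ≤ j → φ j = (φ J + (j - J)) % p := by
    intro j hj
    induction j, hj using Nat.le_induction with
    | base => simp [Nat.mod_eq_of_lt (hφp J)]
    | succ j hj ih =>
        rw [hJphase j hj, ih, Nat.mod_add_mod]
        have h1 : φ J + (j - J) + 1 = φ J + (j + 1 - J) := by omega
        rw [h1]
  set Q : ℕ → ℝ := fun M => (1/(M:ℝ)) * ∑ q ∈ Finset.range M, Vf (z q) with hQ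
  have havg : Filter.Tendsto Q Filter.atTop (𝓝 (avgOrbit Vf p PX)) := by
    set b : ℕ → ℝ := fun q => Vf (PX (φ q)) with hb
    set s : ℕ → ℝ := fun q => Vf (z q) - b q with hs
    have hVfUC := hXfc.uniformContinuousOn_of_continuous hVfc
    rw [Metric.uniformContinuousOn_iff] at hVfUC
    have hs0 : Filter.Tendsto s Filter.atTop (𝓝 0) := by
      rw [Metric.tendsto_atTop]
      intro ε hε
      obtain ⟨δ', hδ', hVδ⟩ := hVfUC ε hε
      have hev : ∀ᶠ j in Filter.atTop, d j < δ' := hdto0.eventually_lt_const hδ'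
      obtain ⟨M, hM⟩ := Filter.eventually_atTop.1 hev
      refine ⟨M, fun q hq => ?_⟩
      have h1 : dist (z q) (PX (φ q)) < δ' := by
        rw [dist_eq_norm]
        exact lt_of_le_of_lt (hzclose q) (hM q hq)
      have h2 := hVδ _ (hzXf q) _ (hPXf _ (hφp q)) h1
      rw [Real.dist_eq] at h2 ⊢
      rw [hs]; simp only
      rw [hb]; simp only
      rw [sub_zero]
      exact h2
    have hcs : Filter.Tendsto (fun K : ℕ => (1/(K:ℝ)) * ∑ q ∈ Finset.range K, s q)
        Filter.atTop (𝓝 0) := by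
      have h1 := hs0.cesaro
      simpa [one_div] using h1
    set a0 : ℕ := φ J + p * J - J with ha0
    set c : ℕ → ℝ := fun q => Vf (PX ((q + a0) % p)) with hc
    have hbc : ∀ q, J ≤ q → b q = c q := by
      intro q hq
      rw [hb, hc]; simp only
      rw [hφform q hq]
      have h1 : q + a0 = (φ J + (q - J)) + p * J := by
        rw [ha0]
        have h2 : J ≤ p * J := Nat.le_mul_of_pos_left J hp
        omega
      rw [h1, Nat.add_mul_mod_self_left]
    have hcavg : Filter.Tendsto (fun K : ℕ => (1/(K:ℝ)) * ∑ q ∈ Finset.range K, c q)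
        Filter.atTop (𝓝 ((1/(p:ℝ)) * ∑ i ∈ Finset.range p, Vf (PX i))) :=
      tendsto_avg_mod (fun i => Vf (PX i)) hp a0
    set Cbc : ℝ := ∑ q ∈ Finset.range J, (b q - c q) with hCbc
    have heq : ∀ K, J ≤ K →
        ∑ q ∈ Finset.range K, b q = (∑ q ∈ Finset.range K, c q) + Cbc := by
      intro K hK
      have h1 : ∑ q ∈ Finset.range K, (b q - c q) = Cbc := by
        rw [hCbc]
        refine (Finset.sum_subset (Finset.range_subset_range.2 hK) ?_).symm
        intro q _ hq
        have hq' : J ≤ q := by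
          by_contra hc2; push_neg at hc2; exact hq (Finset.mem_range.2 hc2)
        rw [hbc q hq']; ring
      have h2 : ∑ q ∈ Finset.range K, (b q - c q)
          = ∑ q ∈ Finset.range K, b q - ∑ q ∈ Finset.range K, c q :=
        Finset.sum_sub_distrib _ _
      linarith
    have hbavg : Filter.Tendsto (fun K : ℕ => (1/(K:ℝ)) * ∑ q ∈ Finset.range K, b q)
        Filter.atTop (𝓝 ((1/(p:ℝ)) * ∑ i ∈ Finset.range p, Vf (PX i))) := by
      have h2 : Filter.Tendsto
          (fun K : ℕ => (1/(K:ℝ)) * ∑ q ∈ Finset.range K, c q + Cbc * (1/(K:ℝ)))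
          Filter.atTop (𝓝 ((1/(p:ℝ)) * ∑ i ∈ Finset.range p, Vf (PX i) + Cbc * 0)) :=
        hcavg.add (tendsto_one_div_atTop_nhds_zero_nat.const_mul Cbc)
      rw [mul_zero, add_zero] at h2
      apply h2.congr'
      filter_upwards [Filter.eventually_ge_atTop J] with K hK
      rw [heq K hK]
      ring
    have hsum : Filter.Tendsto
        (fun K : ℕ => (1/(K:ℝ)) * ∑ q ∈ Finset.range K, s q
          + (1/(K:ℝ)) * ∑ q ∈ Finset.range K, b q)
        Filter.atTop (𝓝 (0 + (1/(p:ℝ)) * ∑ i ∈ Finset.range p, Vf (PX i))) :=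
      hcs.add hbavg
    rw [zero_add] at hsum
    have hVbar : avgOrbit Vf p PX = (1/(p:ℝ)) * ∑ i ∈ Finset.range p, Vf (PX i) := rfl
    rw [hQ, hVbar]
    apply hsum.congr
    intro K
    rw [← mul_add, ← Finset.sum_add_distrib]
    congr 1
    apply Finset.sum_congr rfl
    intro q _
    rw [hs]; simp only
    ring
  set A : ℝ := JN f ℓ Vf x u N with hA
  have hAeq : A = J1 f ℓ x u N + Vf (z 0) := rfl
  set C : ℝ := ∑ n ∈ Finset.range N, J1 f ℓ x w (n+1) with hC
  have hJle : ∀ r : ℕ, J1 f ℓ x w (N + r + 1) ≤ A - Vf (z (r+1)) := by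
    intro r
    have h1 : N + r + 1 = N + (r+1) := rfl
    rw [h1, hJ1ext (r+1)]
    have h2 := hmsum (r+1)
    rw [hAeq]
    linarith
  have hJces_le : ∀ K, N ≤ K → Jces f ℓ x w K
      ≤ (1/(K:ℝ)) * (C + ((K - N : ℕ):ℝ) * A - ∑ r ∈ Finset.range (K - N), Vf (z (r+1))) := by
    intro K hK
    rw [Jces_eq_avg]
    apply mul_le_mul_of_nonneg_left ?_ (by positivity)
    have hsplit : ∑ n ∈ Finset.range K, J1 f ℓ x w (n+1)
        = C + ∑ r ∈ Finset.range (K - N), J1 f ℓ x w (N + r + 1) := by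
      rw [hC]
      have h1 : K = N + (K - N) := by omega
      calc ∑ n ∈ Finset.range K, J1 f ℓ x w (n+1)
          = ∑ n ∈ Finset.range (N + (K - N)), J1 f ℓ x w (n+1) := by rw [← h1]
        _ = (∑ n ∈ Finset.range N, J1 f ℓ x w (n+1))
            + ∑ r ∈ Finset.range (K - N), J1 f ℓ x w (N + r + 1) :=
          Finset.sum_range_add (fun n => J1 f ℓ x w (n+1)) N (K - N)
    rw [hsplit]
    have hsum2 : ∑ r ∈ Finset.range (K - N), J1 f ℓ x w (N + r + 1)
        ≤ ∑ r ∈ Finset.range (K - N), (A - Vf (z (r+1))) :=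
      Finset.sum_le_sum (fun r _ => hJle r)
    have h3 : ∑ r ∈ Finset.range (K - N), (A - Vf (z (r+1)))
        = ((K - N : ℕ):ℝ) * A - ∑ r ∈ Finset.range (K - N), Vf (z (r+1)) := by
      rw [Finset.sum_sub_distrib, Finset.sum_const, Finset.card_range, nsmul_eq_mul]
    linarith
  set W : ℕ → ℝ := fun K =>
    (1/(K:ℝ)) * (C + ((K - N : ℕ):ℝ) * A - ∑ r ∈ Finset.range (K - N), Vf (z (r+1))) with hW
  set G : ℕ → ℝ := fun K => C * (1/(K:ℝ)) + (1 - (N:ℝ)*(1/(K:ℝ))) * A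
    - Q (K - N + 1) * (1 - ((N:ℝ)-1)*(1/(K:ℝ))) + Vf (z 0) * (1/(K:ℝ)) with hG
  have hQcomp : Filter.Tendsto (fun K : ℕ => Q (K - N + 1)) Filter.atTop
      (𝓝 (avgOrbit Vf p PX)) :=
    havg.comp ((Filter.tendsto_add_atTop_nat 1).comp (Filter.tendsto_sub_atTop_nat N))
  have hGlim : Filter.Tendsto G Filter.atTop (𝓝 (A - avgOrbit Vf p PX)) := by
    have h1 : Filter.Tendsto G Filter.atTop
        (𝓝 (C * 0 + (1 - (N:ℝ)*0) * A - avgOrbit Vf p PX * (1 - ((N:ℝ)-1)*0)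
          + Vf (z 0) * 0)) := by
      apply Filter.Tendsto.add
      · apply Filter.Tendsto.sub
        · exact (tendsto_one_div_atTop_nhds_zero_nat.const_mul C).add
            (((tendsto_one_div_atTop_nhds_zero_nat.const_mul (N:ℝ)).const_sub 1).mul_const A)
        · exact hQcomp.mul
            ((tendsto_one_div_atTop_nhds_zero_nat.const_mul ((N:ℝ)-1)).const_sub 1)
      · exact tendsto_one_div_atTop_nhds_zero_nat.const_mul (Vf (z 0))
    have h2 : C * 0 + (1 - (N:ℝ)*0) * A - avgOrbit Vf p PX * (1 - ((N:ℝ)-1)*0)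
        + Vf (z 0) * 0 = A - avgOrbit Vf p PX := by ring
    rwa [h2] at h1
  have hWG : W =ᶠ[Filter.atTop] G := by
    filter_upwards [Filter.eventually_ge_atTop (N+1)] with K hK
    have hKN : N ≤ K := by omega
    have hKne : (K:ℝ) ≠ 0 := Nat.cast_ne_zero.2 (by omega)
    have hc1 : ((K - N : ℕ):ℝ) = (K:ℝ) - N := by
      push_cast [hKN]; ring
    have hc2 : ((K - N + 1 : ℕ):ℝ) = (K:ℝ) - N + 1 := by
      push_cast [hKN]; ring
    have hsum : ∑ r ∈ Finset.range (K - N), Vf (z (r+1))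
        = ∑ q ∈ Finset.range (K - N + 1), Vf (z q) - Vf (z 0) := by
      rw [Finset.sum_range_succ' (fun q => Vf (z q)) (K - N)]
      simp
    have hMne : ((K:ℝ) - N + 1) ≠ 0 := by
      have h4 : (N:ℝ) + 1 ≤ (K:ℝ) := by exact_mod_cast hK
      intro h5; linarith
    rw [hW, hG, hQ]; simp only
    rw [hsum, hc1, hc2]
    field_simp
    ring
  have hWlim : Filter.Tendsto W Filter.atTop (𝓝 (A - avgOrbit Vf p PX)) :=
    hGlim.congr' hWG.symm
  refine ⟨w, hwInf, ?_⟩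
  have h1 : (fun K => Jces f ℓ x w K) ≤ᶠ[Filter.atTop] W := by
    filter_upwards [Filter.eventually_ge_atTop N] with K hK
    exact hJces_le K hK
  have h2 : Filter.limsup (fun K => Jces f ℓ x w K) Filter.atTop
      ≤ Filter.limsup W Filter.atTop :=
    Filter.limsup_le_limsup h1
      (Filter.isCoboundedUnder_le_of_eventually_le Filter.atTop
        (Filter.Eventually.of_forall
          (fun K => Jces_lb f ℓ X U lam hdiss' Λ hΛ0 hΛ x w hwInf K)))
      hWlim.isBoundedUnder_le
  rw [hWlim.limsup_eq] at h2
  exact h2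

end MainAux


set_option maxHeartbeats 1000000 in
theorem stmt8
    (dn dm : ℕ)
    (X : Set (EuclideanSpace ℝ (Fin dn))) (U : Set (EuclideanSpace ℝ (Fin dm)))
    (f : EuclideanSpace ℝ (Fin dn) × EuclideanSpace ℝ (Fin dm) → EuclideanSpace ℝ (Fin dn))
    (ℓ : EuclideanSpace ℝ (Fin dn) × EuclideanSpace ℝ (Fin dm) → ℝ)
    (p : ℕ) (hp : 0 < p)
    (PX : ℕ → EuclideanSpace ℝ (Fin dn)) (PU : ℕ → EuclideanSpace ℝ (Fin dm))
    (hopt : IsOptimalOrbit f X U ℓ p PX PU)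
    -- A1 (continuity and compactness)
    (hcomp : IsCompact (X ×ˢ U))
    (hfc : ContinuousOn f (X ×ˢ U)) (hlc : ContinuousOn ℓ (X ×ˢ U))
    -- A2 (strict dissipativity)
    (lam : EuclideanSpace ℝ (Fin dn) → ℝ) (hlamc : ContinuousOn lam X)
    (αl : ℝ → ℝ) (hαl : IsKInf αl)
    (hdiss : ∀ x ∈ X, ∀ u ∈ U, f (x, u) ∈ X →
      αl (distOrbit p (fun i => (PX i, PU i)) (x, u)) ≤
        rotCost f ℓ lam (avgCost ℓ p PX PU) (x, u))
    -- A3 (terminal conditions)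
    (Xf : Set (EuclideanSpace ℝ (Fin dn))) (hXfc : IsCompact Xf) (hXfX : Xf ⊆ X)
    (hPXf : ∀ i < p, PX i ∈ Xf)
    (Vf : EuclideanSpace ℝ (Fin dn) → ℝ) (hVfc : ContinuousOn Vf Xf)
    (uf : EuclideanSpace ℝ (Fin dn) → EuclideanSpace ℝ (Fin dm))
    (hufU : ∀ x ∈ Xf, uf x ∈ U) (hufX : ∀ x ∈ Xf, f (x, uf x) ∈ X)
    (hufXf : ∀ x ∈ Xf, f (x, uf x) ∈ Xf)
    (hufD : ∀ x ∈ Xf, Vf (f (x, uf x)) + ℓ (x, uf x) - avgCost ℓ p PX PU ≤ Vf x)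
    -- A5 (bound on V_N)
    (γV : ℝ → ℝ) (hγV : IsKInf γV)
    (hA5 : ∀ N : ℕ, 0 < N → ∀ x ∈ XN f X U Xf N, ∀ i < p,
      ‖x - PX i‖ = distOrbitX p PX x →
      |VN f X U ℓ Vf Xf N x - VN f X U ℓ Vf Xf N (PX i)| ≤ γV (distOrbitX p PX x))
    -- A6 (minimality of the optimal orbit)
    (hmin : Set.InjOn PX (Set.Iio p))
    -- normalization ℓ_{Π*} = 0
    (hzero : avgCost ℓ p PX PU = 0) :
    ∃ D : ℝ, 0 < D ∧ ∀ N : ℕ, 0 < N → ∀ x ∈ XN f X U Xf N,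
      -D ≤ VucInf f X U ℓ x ∧
        ∀ i < p, ‖x - PX i‖ = distOrbitX p PX x →
          VucInf f X U ℓ x ≤
            γV (distOrbitX p PX x) + VN f X U ℓ Vf Xf N (PX i) - avgOrbit Vf p PX := by
  classical
  by_cases hU : U.Nonempty
  swap
  · refine ⟨1, one_pos, fun N hN x hx => absurd ?_ hU⟩
    obtain ⟨u, hu, _⟩ := hx
    exact ⟨u 0, hu.1 0 hN⟩
  have hXfne : Xf.Nonempty := ⟨PX 0, hPXf 0 hp⟩
  have hXne : X.Nonempty := ⟨PX 0, hXfX (hPXf 0 hp)⟩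
  have hXcomp : IsCompact X := by
    have h1 : Prod.fst '' (X ×ˢ U) = X := Set.fst_image_prod X hU
    rw [← h1]; exact hcomp.image continuous_fst
  obtain ⟨zΛ, hzΛmem, hzΛmax⟩ := hXcomp.exists_isMaxOn hXne hlamc.abs
  set Λ : ℝ := |lam zΛ| with hΛdef
  have hΛ0 : 0 ≤ Λ := abs_nonneg _
  have hΛ : ∀ z ∈ X, |lam z| ≤ Λ := fun z hz => hzΛmax hz
  obtain ⟨zY, hzYmem, hzYmin⟩ := hXfc.exists_isMinOn hXfne (hVfc.add (hlamc.mono hXfX))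
  have hmY : ∀ z ∈ Xf, Vf zY + lam zY ≤ Vf z + lam z := fun z hz => hzYmin hz
  have hdiss0 : ∀ z ∈ X, ∀ v ∈ U, f (z, v) ∈ X →
      αl (distOrbit p (fun i => (PX i, PU i)) (z, v)) ≤ ℓ (z, v) + lam z - lam (f (z, v)) := by
    intro z hz v hv hf
    have h1 := hdiss z hz v hv hf
    simp only [rotCost, hzero] at h1
    linarith
  have hdiss' : ∀ z ∈ X, ∀ v ∈ U, f (z, v) ∈ X → lam (f (z, v)) - lam z ≤ ℓ (z, v) := by
    intro z hz v hv hf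
    have h1 := hdiss0 z hz v hv hf
    have h2 : 0 ≤ αl (distOrbit p (fun i => (PX i, PU i)) (z, v)) :=
      kinf_nonneg hαl (distOrbit_nonneg _ _ _)
    linarith
  have hufD0 : ∀ z ∈ Xf, Vf (f (z, uf z)) + ℓ (z, uf z) ≤ Vf z := by
    intro z hz
    have h1 := hufD z hz
    rw [hzero] at h1
    linarith
  have horbX : ∀ i < p, PX i ∈ X := hopt.1.1
  have horbU : ∀ i < p, PU i ∈ U := hopt.1.2.1
  have horbf : ∀ i < p, PX ((i + 1) % p) = f (PX i, PU i) := hopt.1.2.2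
  have key : ∀ N : ℕ, 0 < N → ∀ x : EuclideanSpace ℝ (Fin dn),
      ∀ u : ℕ → EuclideanSpace ℝ (Fin dm), FeasN f X U x N u → traj f x u N ∈ Xf →
      ∃ w, FeasInf f X U x w ∧
        JcesInf f ℓ x w ≤ JN f ℓ Vf x u N - avgOrbit Vf p PX :=
    fun N hN x u hu hT =>
      key_lemma f ℓ X U hp PX PU horbX horbU horbf hcomp hfc lam αl hαl hdiss0
        Xf hXfc hXfX hPXf Vf hVfc uf hufU hufXf hufD0 hmin (Vf zY + lam zY) hmY
        Λ hΛ0 hΛ hdiss' N hN x u hu hT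
  refine ⟨2*Λ + 1, by linarith, ?_⟩
  intro N hN x hx
  obtain ⟨u0, hu0, hT0⟩ := hx
  obtain ⟨w0, hw0, _⟩ := key N hN x u0 hu0 hT0
  have hSne : ((fun u => JcesInf f ℓ x u) '' {u | FeasInf f X U x u}).Nonempty :=
    ⟨_, ⟨w0, hw0, rfl⟩⟩
  have hSbb : BddBelow ((fun u => JcesInf f ℓ x u) '' {u | FeasInf f X U x u}) := by
    refine ⟨-(2*Λ), ?_⟩
    rintro bb ⟨u', hu', rfl⟩
    exact JcesInf_lb f ℓ X U lam hdiss' Λ hΛ0 hΛ x u' hu'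
  constructor
  · have h1 : -(2*Λ) ≤ VucInf f X U ℓ x := by
      have h2 : VucInf f X U ℓ x
          = sInf ((fun u => JcesInf f ℓ x u) '' {u | FeasInf f X U x u}) := rfl
      rw [h2]
      apply le_csInf hSne
      rintro bb ⟨u', hu', rfl⟩
      exact JcesInf_lb f ℓ X U lam hdiss' Λ hΛ0 hΛ x u' hu'
    linarith
  · intro i hi hnorm
    have hA5' := hA5 N hN x ⟨u0, hu0, hT0⟩ i hi hnorm
    have hkey2 : VucInf f X U ℓ x ≤ VN f X U ℓ Vf Xf N x - avgOrbit Vf p PX := by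
      apply le_of_forall_pos_le_add
      intro ε hε
      have hJNne : ((fun u => JN f ℓ Vf x u N)
          '' {u : ℕ → EuclideanSpace ℝ (Fin dm) | FeasN f X U x N u ∧ traj f x u N ∈ Xf}).Nonempty :=
        ⟨_, ⟨u0, ⟨hu0, hT0⟩, rfl⟩⟩
      obtain ⟨aval, hmem, hlt⟩ := Real.lt_sInf_add_pos hJNne hε
      obtain ⟨u1, hu1, haval⟩ := hmem
      obtain ⟨w1, hw1, hw1le⟩ := key N hN x u1 hu1.1 hu1.2
      have hv : VucInf f X U ℓ x ≤ JcesInf f ℓ x w1 := csInf_le hSbb ⟨w1, hw1, rfl⟩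
      have hVNx : VN f X U ℓ Vf Xf N x
          = sInf ((fun u => JN f ℓ Vf x u N)
          '' {u : ℕ → EuclideanSpace ℝ (Fin dm) | FeasN f X U x N u ∧ traj f x u N ∈ Xf}) := rfl
      rw [hVNx]
      rw [← haval] at hlt
      linarith
    have habs := abs_le.1 hA5'
    obtain ⟨hab1, hab2⟩ := habs
    linarith
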